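/- Let n ≥ 2, d ≥ 1 and let ρ : sVV_n → Mat_d(ℂ) be a calibrated representation. If every diagonal entry of ρ(y_1) is an integer, then for every j = 1,…,n every diagonal entry of ρ(y_j) is an integer. -/
import Mathlib


noncomputable section

namespace Periplectic

/-- Generators of the degenerate affine periplectic Brauer algebra on `n` strands:
`S i` for `1 ≤ i ≤ n-1`, `E i` for `1 ≤ i ≤ n-1`, `Y j` for `1 ≤ j ≤ n`. -/
inductive Gen (n : ℕ) : Type
  | S (i : ℕ) (h : 1 ≤ i ∧ i ≤ n - 1) : Gen n
  | E (i : ℕ) (h : 1 ≤ i ∧ i ≤ n - 1) : Gen n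
  | Y (j : ℕ) (h : 1 ≤ j ∧ j ≤ n) : Gen n

/-- The free `ℂ`-algebra on the generators. -/
abbrev FA (n : ℕ) : Type := FreeAlgebra ℂ (Gen n)

def fS (n i : ℕ) (h : 1 ≤ i ∧ i ≤ n - 1) : FA n := FreeAlgebra.ι ℂ (Gen.S i h)
def fE (n i : ℕ) (h : 1 ≤ i ∧ i ≤ n - 1) : FA n := FreeAlgebra.ι ℂ (Gen.E i h)
def fY (n j : ℕ) (h : 1 ≤ j ∧ j ≤ n) : FA n := FreeAlgebra.ι ℂ (Gen.Y j h)

/-- The defining relations of the degenerate affine periplectic Brauer algebra. -/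
inductive Rel (n : ℕ) : FA n → FA n → Prop
  /- (VV1)  s_i² = 1 -/
  | s_sq (i : ℕ) (h : 1 ≤ i ∧ i ≤ n - 1) :
      Rel n (fS n i h * fS n i h) 1
  /- (VV2)(i)  s_i e_j = e_j s_i for |i-j| > 1 -/
  | se_comm (i j : ℕ) (hi : 1 ≤ i ∧ i ≤ n - 1) (hj : 1 ≤ j ∧ j ≤ n - 1)
      (hij : i + 1 < j ∨ j + 1 < i) :
      Rel n (fS n i hi * fE n j hj) (fE n j hj * fS n i hi)
  /- (VV2)(ii)  e_i e_j = e_j e_i for |i-j| > 1 -/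
  | ee_comm (i j : ℕ) (hi : 1 ≤ i ∧ i ≤ n - 1) (hj : 1 ≤ j ∧ j ≤ n - 1)
      (hij : i + 1 < j ∨ j + 1 < i) :
      Rel n (fE n i hi * fE n j hj) (fE n j hj * fE n i hi)
  /- (VV2)(iii)  e_i y_j = y_j e_i for j ∉ {i, i+1} -/
  | ey_comm (i j : ℕ) (hi : 1 ≤ i ∧ i ≤ n - 1) (hj : 1 ≤ j ∧ j ≤ n)
      (hij : j ≠ i ∧ j ≠ i + 1) :
      Rel n (fE n i hi * fY n j hj) (fY n j hj * fE n i hi)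
  /- (VV2)(iv)  y_i y_j = y_j y_i -/
  | yy_comm (i j : ℕ) (hi : 1 ≤ i ∧ i ≤ n) (hj : 1 ≤ j ∧ j ≤ n) :
      Rel n (fY n i hi * fY n j hj) (fY n j hj * fY n i hi)
  /- (VV3)(i)  s_i s_j = s_j s_i for |i-j| > 1 -/
  | ss_comm (i j : ℕ) (hi : 1 ≤ i ∧ i ≤ n - 1) (hj : 1 ≤ j ∧ j ≤ n - 1)
      (hij : i + 1 < j ∨ j + 1 < i) :
      Rel n (fS n i hi * fS n j hj) (fS n j hj * fS n i hi)
  /- (VV3)(ii)  braid relation -/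
  | braid (i : ℕ) (hi : 1 ≤ i ∧ i ≤ n - 1) (hi1 : 1 ≤ i + 1 ∧ i + 1 ≤ n - 1) :
      Rel n (fS n i hi * fS n (i+1) hi1 * fS n i hi)
            (fS n (i+1) hi1 * fS n i hi * fS n (i+1) hi1)
  /- (VV3)(iii)  s_i y_j = y_j s_i for j ∉ {i, i+1} -/
  | sy_comm (i j : ℕ) (hi : 1 ≤ i ∧ i ≤ n - 1) (hj : 1 ≤ j ∧ j ≤ n)
      (hij : j ≠ i ∧ j ≠ i + 1) :
      Rel n (fS n i hi * fY n j hj) (fY n j hj * fS n i hi)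
  /- (VV4)(i)  e_{i+1} e_i e_{i+1} = -e_{i+1} -/
  | eee_up (i : ℕ) (hi : 1 ≤ i ∧ i ≤ n - 1) (hi1 : 1 ≤ i + 1 ∧ i + 1 ≤ n - 1) :
      Rel n (fE n (i+1) hi1 * fE n i hi * fE n (i+1) hi1) (-(fE n (i+1) hi1))
  /- (VV4)(ii)  e_i e_{i+1} e_i = -e_i -/
  | eee_down (i : ℕ) (hi : 1 ≤ i ∧ i ≤ n - 1) (hi1 : 1 ≤ i + 1 ∧ i + 1 ≤ n - 1) :
      Rel n (fE n i hi * fE n (i+1) hi1 * fE n i hi) (-(fE n i hi))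
  /- (VV5)(i)  e_i s_i = e_i  and  s_i e_i = -e_i -/
  | es (i : ℕ) (hi : 1 ≤ i ∧ i ≤ n - 1) :
      Rel n (fE n i hi * fS n i hi) (fE n i hi)
  | se (i : ℕ) (hi : 1 ≤ i ∧ i ≤ n - 1) :
      Rel n (fS n i hi * fE n i hi) (-(fE n i hi))
  /- (VV5)(ii)  s_i e_{i+1} e_i = s_{i+1} e_i -/
  | see (i : ℕ) (hi : 1 ≤ i ∧ i ≤ n - 1) (hi1 : 1 ≤ i + 1 ∧ i + 1 ≤ n - 1) :
      Rel n (fS n i hi * fE n (i+1) hi1 * fE n i hi) (fS n (i+1) hi1 * fE n i hi)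
  /- (VV5)(iii)  s_{i+1} e_i e_{i+1} = -s_i e_{i+1} -/
  | see' (i : ℕ) (hi : 1 ≤ i ∧ i ≤ n - 1) (hi1 : 1 ≤ i + 1 ∧ i + 1 ≤ n - 1) :
      Rel n (fS n (i+1) hi1 * fE n i hi * fE n (i+1) hi1) (-(fS n i hi * fE n (i+1) hi1))
  /- (VV5)(iv)  e_{i+1} e_i s_{i+1} = e_{i+1} s_i -/
  | ees (i : ℕ) (hi : 1 ≤ i ∧ i ≤ n - 1) (hi1 : 1 ≤ i + 1 ∧ i + 1 ≤ n - 1) :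
      Rel n (fE n (i+1) hi1 * fE n i hi * fS n (i+1) hi1) (fE n (i+1) hi1 * fS n i hi)
  /- (VV5)(v)  e_i e_{i+1} s_i = -e_i s_{i+1} -/
  | ees' (i : ℕ) (hi : 1 ≤ i ∧ i ≤ n - 1) (hi1 : 1 ≤ i + 1 ∧ i + 1 ≤ n - 1) :
      Rel n (fE n i hi * fE n (i+1) hi1 * fS n i hi) (-(fE n i hi * fS n (i+1) hi1))
  /- (VV6)  e_i² = 0 -/
  | e_sq (i : ℕ) (hi : 1 ≤ i ∧ i ≤ n - 1) :
      Rel n (fE n i hi * fE n i hi) 0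
  /- (VV7)(i)  s_i y_i - y_{i+1} s_i = -e_i - 1 -/
  | sy_rel (i : ℕ) (hi : 1 ≤ i ∧ i ≤ n - 1) (hyi : 1 ≤ i ∧ i ≤ n)
      (hyi1 : 1 ≤ i + 1 ∧ i + 1 ≤ n) :
      Rel n (fS n i hi * fY n i hyi - fY n (i+1) hyi1 * fS n i hi) (-(fE n i hi) - 1)
  /- (VV7)(ii)  y_i s_i - s_i y_{i+1} = e_i - 1 -/
  | ys_rel (i : ℕ) (hi : 1 ≤ i ∧ i ≤ n - 1) (hyi : 1 ≤ i ∧ i ≤ n)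
      (hyi1 : 1 ≤ i + 1 ∧ i + 1 ≤ n) :
      Rel n (fY n i hyi * fS n i hi - fS n i hi * fY n (i+1) hyi1) (fE n i hi - 1)
  /- (VV8)(i)  e_i (y_i - y_{i+1}) = -e_i -/
  | e_ydiff (i : ℕ) (hi : 1 ≤ i ∧ i ≤ n - 1) (hyi : 1 ≤ i ∧ i ≤ n)
      (hyi1 : 1 ≤ i + 1 ∧ i + 1 ≤ n) :
      Rel n (fE n i hi * (fY n i hyi - fY n (i+1) hyi1)) (-(fE n i hi))
  /- (VV8)(ii)  (y_i - y_{i+1}) e_i = e_i -/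
  | ydiff_e (i : ℕ) (hi : 1 ≤ i ∧ i ≤ n - 1) (hyi : 1 ≤ i ∧ i ≤ n)
      (hyi1 : 1 ≤ i + 1 ∧ i + 1 ≤ n) :
      Rel n ((fY n i hyi - fY n (i+1) hyi1) * fE n i hi) (fE n i hi)

/-- The degenerate affine periplectic Brauer algebra `sVV n`. -/
abbrev sVV (n : ℕ) : Type := RingQuot (Rel n)

/-- The generator `s_i` of `sVV n`. -/
def sgen (n i : ℕ) (h : 1 ≤ i ∧ i ≤ n - 1) : sVV n :=
  RingQuot.mkAlgHom ℂ (Rel n) (fS n i h)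

/-- The generator `e_i` of `sVV n`. -/
def egen (n i : ℕ) (h : 1 ≤ i ∧ i ≤ n - 1) : sVV n :=
  RingQuot.mkAlgHom ℂ (Rel n) (fE n i h)

/-- The generator `y_j` of `sVV n`. -/
def ygen (n j : ℕ) (h : 1 ≤ j ∧ j ≤ n) : sVV n :=
  RingQuot.mkAlgHom ℂ (Rel n) (fY n j h)

/-- Total version of `s_i` (equal to `sgen n i _` when `1 ≤ i ≤ n-1`, and `0` otherwise). -/
def ss (n i : ℕ) : sVV n := if h : 1 ≤ i ∧ i ≤ n - 1 then sgen n i h else 0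

/-- Total version of `e_i`. -/
def ee (n i : ℕ) : sVV n := if h : 1 ≤ i ∧ i ≤ n - 1 then egen n i h else 0

/-- Total version of `y_j`. -/
def yy (n j : ℕ) : sVV n := if h : 1 ≤ j ∧ j ≤ n then ygen n j h else 0


/-- A calibrated representation of `sVV n` of dimension `d`: a unital `ℂ`-algebra homomorphism
to `d × d` matrices under which every `y_j` acts by a diagonal matrix. -/
def IsCalibrated {n d : ℕ} (ρ : sVV n →ₐ[ℂ] Matrix (Fin d) (Fin d) ℂ) : Prop :=
  ∀ j : ℕ, 1 ≤ j → j ≤ n → (ρ (yy n j)).IsDiag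

/-- Indecomposability of a matrix representation of `sVV n`: there is no direct sum
decomposition `ℂ^d = U ⊕ W` with `U, W` nonzero subspaces invariant under all `ρ a`. -/
def IsIndecomposableRep {n d : ℕ} (ρ : sVV n →ₐ[ℂ] Matrix (Fin d) (Fin d) ℂ) : Prop :=
  ¬ ∃ U W : Submodule ℂ (Fin d → ℂ), U ≠ ⊥ ∧ W ≠ ⊥ ∧ IsCompl U W ∧
      (∀ a : sVV n, ∀ x ∈ U, (ρ a).mulVec x ∈ U) ∧
      (∀ a : sVV n, ∀ x ∈ W, (ρ a).mulVec x ∈ W)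

lemma mul_diag_entry {d : ℕ} (S A : Matrix (Fin d) (Fin d) ℂ) (hA : A.IsDiag) (k m : Fin d) :
    (S * A) k m = S k m * A m m := by
  rw [Matrix.mul_apply]
  exact Finset.sum_eq_single m (fun j _ hj => by rw [hA hj, mul_zero]) (by simp)

lemma diag_mul_entry {d : ℕ} (B S : Matrix (Fin d) (Fin d) ℂ) (hB : B.IsDiag) (k m : Fin d) :
    (B * S) k m = B k k * S k m := by
  rw [Matrix.mul_apply]
  exact Finset.sum_eq_single k (fun j _ hj => by rw [hB (Ne.symm hj), zero_mul]) (by simp)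

lemma key_spectral {d : ℕ} (S E A B : Matrix (Fin d) (Fin d) ℂ) (hA : A.IsDiag) (hB : B.IsDiag)
    (h1 : S * S = 1) (h2 : S * A - B * S = -E - 1) (h4 : (A - B) * E = E) (k : Fin d) :
    (∃ m : Fin d, B k k = A m m) ∨ B k k = A k k - 1 ∨ B k k = A k k + 1 := by
  by_cases hrow : ∃ m, E k m ≠ 0
  · obtain ⟨m, hm⟩ := hrow
    have h4km : ((A - B) * E) k m = E k m := by rw [h4]
    rw [diag_mul_entry _ _ (hA.sub hB) k m] at h4km
    have hd : (A - B) k k = 1 := by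
      have : ((A - B) k k - 1) * E k m = 0 := by linear_combination h4km
      rcases mul_eq_zero.mp this with h | h
      · linear_combination h
      · exact absurd h hm
    right; left
    have h5 : A k k - B k k = 1 := by simpa [Matrix.sub_apply] using hd
    linear_combination -h5
  · push_neg at hrow
    by_cases hex : ∃ m : Fin d, B k k = A m m
    · exact Or.inl hex
    · push_neg at hex
      have hS : ∀ m, m ≠ k → S k m = 0 := by
        intro m hmk
        have h2km : (S * A - B * S) k m = (-E - 1) k m := by rw [h2]
        rw [Matrix.sub_apply, mul_diag_entry _ _ hA, diag_mul_entry _ _ hB] at h2km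
        have : S k m * A m m - B k k * S k m = 0 := by
          rw [h2km]; simp [Matrix.one_apply_ne (Ne.symm hmk), hrow m]
        have hfac : S k m * (A m m - B k k) = 0 := by linear_combination this
        rcases mul_eq_zero.mp hfac with h | h
        · exact h
        · exact absurd (sub_eq_zero.mp h).symm (hex m)
      have hkk : S k k * (A k k - B k k) = -1 := by
        have h2kk : (S * A - B * S) k k = (-E - 1) k k := by rw [h2]
        rw [Matrix.sub_apply, mul_diag_entry _ _ hA, diag_mul_entry _ _ hB] at h2kk
        have : S k k * A k k - B k k * S k k = -1 := by
          rw [h2kk]; simp [Matrix.one_apply_eq, hrow k]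
        linear_combination this
      have hSkk : S k k * S k k = 1 := by
        have h1kk : (S * S) k k = (1 : Matrix (Fin d) (Fin d) ℂ) k k := by rw [h1]
        rw [Matrix.mul_apply, Matrix.one_apply_eq] at h1kk
        have hsum : ∑ j : Fin d, S k j * S j k = S k k * S k k :=
          Finset.sum_eq_single k (fun j _ hj => by rw [hS j hj, zero_mul]) (by simp)
        rw [← hsum]; exact h1kk
      rcases mul_self_eq_one_iff.mp hSkk with h | h
      · right; right
        rw [h, one_mul] at hkk
        linear_combination -hkk
      · right; left
        rw [h] at hkk
        linear_combination hkk

/-- In a calibrated representation of `sVV n`, if all eigenvalues of `y_1`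
(i.e. all diagonal entries of `ρ(y_1)`) are integers, then so are those of every `y_j`. -/
theorem integer_eigenvalues (n d : ℕ) (hn : 2 ≤ n) (hd : 1 ≤ d)
    (ρ : sVV n →ₐ[ℂ] Matrix (Fin d) (Fin d) ℂ) (hcal : IsCalibrated ρ)
    (h1 : ∀ ℓ : Fin d, ∃ m : ℤ, ρ (yy n 1) ℓ ℓ = (m : ℂ)) :
    ∀ j : ℕ, 1 ≤ j → j ≤ n → ∀ ℓ : Fin d, ∃ m : ℤ, ρ (yy n j) ℓ ℓ = (m : ℂ) := by
  intro j
  induction j with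
  | zero => intro hj1 _; exact absurd hj1 (by omega)
  | succ j ih =>
    intro hj1 hjn
    rcases Nat.eq_zero_or_pos j with hj0 | hjpos
    · subst hj0; exact h1
    · have hi : 1 ≤ j ∧ j ≤ n - 1 := ⟨hjpos, by omega⟩
      have hyi : 1 ≤ j ∧ j ≤ n := ⟨hjpos, by omega⟩
      have hyi1 : 1 ≤ j + 1 ∧ j + 1 ≤ n := ⟨by omega, hjn⟩
      have rs : sgen n j hi * sgen n j hi = 1 := by
        have := RingQuot.mkAlgHom_rel ℂ (Rel.s_sq j hi)
        simpa [sgen, map_mul, map_one] using this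
      have r2 : sgen n j hi * ygen n j hyi - ygen n (j+1) hyi1 * sgen n j hi
          = -(egen n j hi) - 1 := by
        have := RingQuot.mkAlgHom_rel ℂ (Rel.sy_rel j hi hyi hyi1)
        simpa [sgen, ygen, egen, map_mul, map_sub, map_one, map_neg] using this
      have r4 : (ygen n j hyi - ygen n (j+1) hyi1) * egen n j hi = egen n j hi := by
        have := RingQuot.mkAlgHom_rel ℂ (Rel.ydiff_e j hi hyi hyi1)
        simpa [ygen, egen, map_mul, map_sub] using this
      have hyyj : yy n j = ygen n j hyi := dif_pos hyi
      have hyyj1 : yy n (j+1) = ygen n (j+1) hyi1 := dif_pos hyi1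
      have hA : (ρ (ygen n j hyi)).IsDiag := by
        have := hcal j hjpos (by omega); rwa [hyyj] at this
      have hB : (ρ (ygen n (j+1) hyi1)).IsDiag := by
        have := hcal (j+1) (by omega) hjn; rwa [hyyj1] at this
      have m1 : ρ (sgen n j hi) * ρ (sgen n j hi) = 1 := by
        rw [← map_mul, rs, map_one]
      have m2 : ρ (sgen n j hi) * ρ (ygen n j hyi) - ρ (ygen n (j+1) hyi1) * ρ (sgen n j hi)
          = -(ρ (egen n j hi)) - 1 := by
        have := congrArg ρ r2
        simpa [map_mul, map_sub, map_neg, map_one] using this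
      have m4 : (ρ (ygen n j hyi) - ρ (ygen n (j+1) hyi1)) * ρ (egen n j hi)
          = ρ (egen n j hi) := by
        have := congrArg ρ r4
        simpa [map_mul, map_sub] using this
      intro ℓ
      rcases key_spectral (ρ (sgen n j hi)) (ρ (egen n j hi)) (ρ (ygen n j hyi))
          (ρ (ygen n (j+1) hyi1)) hA hB m1 m2 m4 ℓ with ⟨m, hm⟩ | hm | hm
      · obtain ⟨z, hz⟩ := ih hjpos (by omega) m
        rw [hyyj] at hz
        exact ⟨z, by rw [hyyj1, hm, hz]⟩
      · obtain ⟨z, hz⟩ := ih hjpos (by omega) ℓ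
        rw [hyyj] at hz
        exact ⟨z - 1, by rw [hyyj1, hm, hz]; push_cast; ring⟩
      · obtain ⟨z, hz⟩ := ih hjpos (by omega) ℓ
        rw [hyyj] at hz
        exact ⟨z + 1, by rw [hyyj1, hm, hz]; push_cast; ring⟩

end Periplectic
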